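/- For any K-dimensional positive definite Hermitian complex matrix O, letting O₁ be the diagonal matrix consisting of the diagonal entries of O, the trace of O₁⁻¹ is at most the trace of O⁻¹. -/

import Mathlib

open Matrix
open scoped ComplexOrder

/-- Cauchy–Schwarz for the positive-definite sesquilinear form induced by a matrix. -/
lemma cs_aux {K : ℕ} (O : Matrix (Fin K) (Fin K) ℂ) (hO : O.PosDef) (x y : Fin K → ℂ) :
    ‖star x ⬝ᵥ (O *ᵥ y)‖ * ‖star y ⬝ᵥ (O *ᵥ x)‖ ≤
      (star x ⬝ᵥ (O *ᵥ x)).re * (star y ⬝ᵥ (O *ᵥ y)).re := by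
  letI c : PreInnerProductSpace.Core ℂ (Fin K → ℂ) :=
    { inner := fun x y => dotProduct (star x) (O *ᵥ y)
      conj_inner_symm := fun x y => by
        show (starRingEnd ℂ) (dotProduct (star y) (O *ᵥ x)) = dotProduct (star x) (O *ᵥ y)
        rw [star_dotProduct, starRingEnd_apply, star_star, star_mulVec, dotProduct_mulVec,
          hO.isHermitian.eq]
      re_inner_nonneg := fun x => by
        by_cases h : x = 0
        · simp [h]
        · exact le_of_lt (hO.re_dotProduct_pos h)
      add_left := by simp only [star_add, add_dotProduct, eq_self_iff_true, forall_const]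
      smul_left := fun x y r => by
        show dotProduct (star (r • x)) (O *ᵥ y) = (starRingEnd ℂ) r * dotProduct (star x) (O *ᵥ y)
        rw [← smul_eq_mul, ← smul_dotProduct, starRingEnd_apply, ← star_smul] }
  exact InnerProductSpace.Core.inner_mul_inner_self_le (𝕜 := ℂ) x y

/-- For any `K`-dimensional positive definite Hermitian complex matrix `O`, letting `O₁` be the
diagonal matrix consisting of the diagonal entries of `O`, the trace of `O₁⁻¹` is at most the
trace of `O⁻¹` (both traces are real numbers). -/
theorem trace_inv_diagonal_le_trace_inv {K : ℕ} (O : Matrix (Fin K) (Fin K) ℂ)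
    (hO : O.PosDef) :
    ((Matrix.diagonal (fun k => O k k))⁻¹).trace.re ≤ (O⁻¹).trace.re := by
  have hinv : O⁻¹.PosDef := hO.inv
  have hunit := hO.isUnit
  letI := hunit.invertible
  -- key pointwise inequality
  have key : ∀ k : Fin K, ((O k k)⁻¹).re ≤ ((O⁻¹) k k).re := by
    intro k
    set x : Fin K → ℂ := Pi.single k 1 with hx
    have hxne : x ≠ 0 := by
      intro h
      have := congrFun h k
      simp [hx] at this
    have hOkk : (star x ⬝ᵥ (O *ᵥ x)) = O k k := by
      simp [hx, mulVec_single, dotProduct, Pi.single_apply, Finset.sum_ite_eq']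
    have hOikk : (star x ⬝ᵥ (O⁻¹ *ᵥ x)) = (O⁻¹) k k := by
      simp [hx, mulVec_single, dotProduct, Pi.single_apply, Finset.sum_ite_eq']
    have hre_pos : 0 < (O k k).re := by
      have := hO.re_dotProduct_pos hxne
      rwa [hOkk] at this
    have hire_pos : 0 < ((O⁻¹) k k).re := by
      have := hinv.re_dotProduct_pos hxne
      rwa [hOikk] at this
    -- Cauchy–Schwarz with y = O⁻¹ *ᵥ x
    have hcs := cs_aux O hO x (O⁻¹ *ᵥ x)
    have h1 : star x ⬝ᵥ (O *ᵥ (O⁻¹ *ᵥ x)) = 1 := by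
      rw [mulVec_mulVec, Matrix.mul_nonsing_inv _ (isUnit_iff_isUnit_det _ |>.mp hunit),
        one_mulVec]
      simp [hx, dotProduct, Pi.single_apply]
    have h2 : star (O⁻¹ *ᵥ x) ⬝ᵥ (O *ᵥ x) = 1 := by
      rw [star_mulVec, hinv.isHermitian.eq, dotProduct_mulVec, vecMul_vecMul,
        Matrix.nonsing_inv_mul _ (isUnit_iff_isUnit_det _ |>.mp hunit), vecMul_one]
      simp [hx, dotProduct, Pi.single_apply]
    have h3 : star (O⁻¹ *ᵥ x) ⬝ᵥ (O *ᵥ (O⁻¹ *ᵥ x)) = (O⁻¹) k k := by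
      rw [mulVec_mulVec, Matrix.mul_nonsing_inv _ (isUnit_iff_isUnit_det _ |>.mp hunit),
        one_mulVec, star_mulVec, hinv.isHermitian.eq, ← dotProduct_mulVec, hOikk]
    rw [h1, h2, h3, hOkk] at hcs
    simp only [norm_one, one_mul] at hcs
    -- hcs : 1 ≤ (O k k).re * ((O⁻¹) k k).re
    have him : (O k k).im = 0 := by
      have := congrFun (congrFun hO.isHermitian.eq k) k
      simp only [conjTranspose_apply, RCLike.star_def] at this
      have := congrArg Complex.im this
      simp at this
      linarith [Complex.conj_im (O k k)]
    have hinv_re : ((O k k)⁻¹).re = ((O k k).re)⁻¹ := by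
      rw [Complex.inv_re, Complex.normSq_apply, him]
      field_simp
      ring
    rw [hinv_re, inv_le_iff_one_le_mul₀ hre_pos]
    linarith
  -- conclude via traces
  have hne : ∀ k : Fin K, O k k ≠ 0 := by
    intro k h
    have hxne : (Pi.single k 1 : Fin K → ℂ) ≠ 0 := by
      intro hh
      have := congrFun hh k
      simp at this
    have hp := hO.re_dotProduct_pos hxne
    have hOkk : (star (Pi.single k 1 : Fin K → ℂ) ⬝ᵥ (O *ᵥ Pi.single k 1)) = O k k := by
      simp [mulVec_single, dotProduct, Pi.single_apply, Finset.sum_ite_eq']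
    rw [hOkk, h] at hp
    simp at hp
  have hdinv : (Matrix.diagonal (fun k => O k k))⁻¹
      = Matrix.diagonal (fun k => (O k k)⁻¹) := by
    apply Matrix.inv_eq_right_inv
    rw [diagonal_mul_diagonal]
    convert Matrix.diagonal_one using 2
    ext k
    exact mul_inv_cancel₀ (hne k)
  rw [hdinv]
  simp only [Matrix.trace, Matrix.diag, Matrix.diagonal_apply_eq, Complex.re_sum]
  exact Finset.sum_le_sum fun k _ => key k
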